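/- Let Φ₁, Φ₂ be strictly plurisubharmonic quadratic weights on ℂ with associated quantities a = α₂/α₁ and b = |β₂−β₁|/α₁. Then there exists a constant C ≥ 0 such that ‖u‖_{Φ₂} ≤ C·‖u‖_{Φ₁} for every entire function u : ℂ → ℂ if and only if a − b ≥ 1 (equivalently, if and only if Φ₁(z) ≤ Φ₂(z) for all z ∈ ℂ). -/

import Mathlib

open MeasureTheory

/-- The Gaussian-weighted `L²` norm of a function on `ℂ`, valued in `[0,∞]`:
`‖f‖_Φ = (∫_ℂ |f(z)|² e^{-2Φ(z)} dA(z))^{1/2}`. -/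
noncomputable def wnorm (Φ : ℂ → ℝ) (f : ℂ → ℂ) : ENNReal :=
  (∫⁻ z : ℂ, ENNReal.ofReal (‖f z‖ ^ 2 * Real.exp (-2 * Φ z))) ^ (1 / 2 : ℝ)

section Aux

open Complex
open scoped ENNReal


lemma re_le (γ z : ℂ) : |(γ * z ^ 2).re| ≤ ‖γ‖ * ‖z‖ ^ 2 := by
  calc |(γ * z ^ 2).re| ≤ ‖γ * z ^ 2‖ := Complex.abs_re_le_norm _
    _ = ‖γ‖ * ‖z‖ ^ 2 := by rw [norm_mul, norm_pow]

lemma gauss_meas (α : ℝ) (γ : ℂ) : Measurable (fun z : ℂ =>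
    ENNReal.ofReal (Real.exp (-2 * α * ‖z‖ ^ 2 + 2 * (γ * z ^ 2).re))) := by
  have hc : Continuous fun z : ℂ => -2 * α * ‖z‖ ^ 2 + 2 * (γ * z ^ 2).re :=
    (continuous_const.mul (continuous_norm.pow 2)).add
      (continuous_const.mul (Complex.continuous_re.comp (continuous_const.mul (continuous_pow 2))))
  exact (Real.continuous_exp.comp hc).measurable.ennreal_ofReal

lemma gauss_lt_top {α : ℝ} {γ : ℂ} (h : ‖γ‖ < α) :
    ∫⁻ z : ℂ, ENNReal.ofReal (Real.exp (-2 * α * ‖z‖ ^ 2 + 2 * (γ * z ^ 2).re)) < ⊤ := by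
  have h0 := norm_nonneg γ
  have hpos : (0:ℝ) < 2 * (α - ‖γ‖) := by linarith
  have hI : Integrable (fun v : ℂ => Real.exp (-(2 * (α - ‖γ‖)) * ‖v‖ ^ 2)) := by
    have h1 := (GaussianFourier.integrable_cexp_neg_mul_sq_norm_add
      (V := ℂ) (b := ((2 * (α - ‖γ‖) : ℝ) : ℂ)) (by simpa using hpos) 0 0).norm
    convert h1 using 2 with v
    simp [Complex.norm_exp]
    norm_cast
    exact Or.inl rfl
  have hmono : ∀ z : ℂ, ENNReal.ofReal (Real.exp (-2 * α * ‖z‖ ^ 2 + 2 * (γ * z ^ 2).re))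
      ≤ ENNReal.ofReal (Real.exp (-(2 * (α - ‖γ‖)) * ‖z‖ ^ 2)) := by
    intro z
    apply ENNReal.ofReal_le_ofReal
    apply Real.exp_le_exp.2
    have h1 := abs_le.1 (re_le γ z)
    nlinarith [h1.2]
  exact lt_of_le_of_lt (lintegral_mono hmono) hI.lintegral_lt_top

lemma gauss_eq_top {α : ℝ} {γ : ℂ} (hα : 0 < α) (h : α ≤ ‖γ‖) :
    ∫⁻ z : ℂ, ENNReal.ofReal (Real.exp (-2 * α * ‖z‖ ^ 2 + 2 * (γ * z ^ 2).re)) = ⊤ := by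
  set d : ℝ := ‖γ‖ with hd
  have hγ : γ ≠ 0 := by
    intro h0; rw [hd, h0] at h; simp at h; linarith
  have hdpos : 0 < d := lt_of_lt_of_le hα h
  obtain ⟨w, hw⟩ := IsAlgClosed.exists_pow_nat_eq ((starRingEnd ℂ) γ / (d : ℂ)) (n := 2) (by norm_num)
  have hdne : (d : ℂ) ≠ 0 := Complex.ofReal_ne_zero.2 (ne_of_gt hdpos)
  have habs : ‖w‖ = 1 := by
    have h2 : ‖w‖ ^ 2 = 1 := by
      rw [← norm_pow, hw, norm_div, Complex.norm_conj, Complex.norm_real, Real.norm_eq_abs,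
        abs_of_pos hdpos, div_self (ne_of_gt hdpos)]
    nlinarith [norm_nonneg w]
  have hγw : γ * w ^ 2 = (d : ℂ) := by
    rw [hw]
    field_simp
    rw [Complex.mul_conj, Complex.normSq_eq_norm_sq]
    push_cast
    ring
  -- rotate
  set W : Circle := ⟨w, mem_sphere_zero_iff_norm.2 (by rw [habs])⟩ with hW
  have hrot := ((rotation W).measurePreserving ).lintegral_comp
    (f := fun z : ℂ => ENNReal.ofReal (Real.exp (-2 * α * ‖z‖ ^ 2 + 2 * (γ * z ^ 2).re)))
    (gauss_meas α γ)
  have hcomp : ∀ z : ℂ, ENNReal.ofReal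
      (Real.exp (-2 * α * ‖(rotation W) z‖ ^ 2 + 2 * (γ * ((rotation W) z) ^ 2).re))
      = ENNReal.ofReal (Real.exp (-2 * α * ‖z‖ ^ 2 + 2 * (d * (z ^ 2).re))) := by
    intro z
    rw [rotation_apply]
    congr 2
    have h1 : ‖↑W * z‖ = ‖z‖ := by
      rw [norm_mul]
      simp [hW, habs]
    have h2 : (γ * ((W : ℂ) * z) ^ 2).re = d * (z ^ 2).re := by
      have : γ * ((W : ℂ) * z) ^ 2 = (d : ℂ) * z ^ 2 := by
        rw [← hγw]; simp [hW]; ring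
      rw [this, Complex.re_ofReal_mul]
    rw [h1, h2]
  rw [← hrot]
  simp_rw [hcomp]
  -- transfer to ℝ × ℝ
  have hmeas2 : Measurable (fun z : ℂ =>
      ENNReal.ofReal (Real.exp (-2 * α * ‖z‖ ^ 2 + 2 * (d * (z ^ 2).re)))) := by
    have hc : Continuous fun z : ℂ => -2 * α * ‖z‖ ^ 2 + 2 * (d * (z ^ 2).re) :=
      (continuous_const.mul (continuous_norm.pow 2)).add
        (continuous_const.mul (continuous_const.mul
          (Complex.continuous_re.comp (continuous_pow 2))))
    exact (Real.continuous_exp.comp hc).measurable.ennreal_ofReal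
  have hprod := (Complex.volume_preserving_equiv_real_prod.symm).lintegral_comp hmeas2
  rw [← hprod]
  have hpt : ∀ p : ℝ × ℝ, ENNReal.ofReal (Real.exp (-2 * α *
        ‖Complex.measurableEquivRealProd.symm p‖ ^ 2
        + 2 * (d * ((Complex.measurableEquivRealProd.symm p) ^ 2).re)))
      = ENNReal.ofReal (Real.exp (-(2 * (α - d)) * p.1 ^ 2))
        * ENNReal.ofReal (Real.exp (-(2 * (α + d)) * p.2 ^ 2)) := by
    intro p
    rw [← ENNReal.ofReal_mul (Real.exp_nonneg _), ← Real.exp_add]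
    congr 1
    have hre : (Complex.measurableEquivRealProd.symm p).re = p.1 := rfl
    have him : (Complex.measurableEquivRealProd.symm p).im = p.2 := rfl
    rw [Complex.sq_norm, Complex.normSq_apply, pow_two, Complex.mul_re, hre, him]
    ring
  simp_rw [hpt]
  have hf : AEMeasurable (fun x : ℝ => ENNReal.ofReal (Real.exp (-(2 * (α - d)) * x ^ 2))) volume :=
    ((Real.continuous_exp.comp (by continuity)).measurable.ennreal_ofReal).aemeasurable
  have hg : AEMeasurable (fun y : ℝ => ENNReal.ofReal (Real.exp (-(2 * (α + d)) * y ^ 2))) volume :=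
    ((Real.continuous_exp.comp (by continuity)).measurable.ennreal_ofReal).aemeasurable
  rw [MeasureTheory.Measure.volume_eq_prod, lintegral_prod_mul hf hg]
  · have hx : ∫⁻ x : ℝ, ENNReal.ofReal (Real.exp (-(2 * (α - d)) * x ^ 2)) = ⊤ := by
      refine top_le_iff.1 ?_
      have h1 : (⊤ : ℝ≥0∞) = ∫⁻ (_x : ℝ), (1 : ℝ≥0∞) := by simp
      rw [h1]
      apply lintegral_mono
      intro x
      rw [← ENNReal.ofReal_one]
      apply ENNReal.ofReal_le_ofReal
      apply Real.one_le_exp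
      have : 0 ≤ -(2 * (α - d)) := by linarith
      positivity
    have hy : ∫⁻ y : ℝ, ENNReal.ofReal (Real.exp (-(2 * (α + d)) * y ^ 2)) ≠ 0 := by
      have hm : Measurable fun y : ℝ => ENNReal.ofReal (Real.exp (-(2 * (α + d)) * y ^ 2)) := by
        exact (Real.continuous_exp.comp (by continuity)).measurable.ennreal_ofReal
      rw [← pos_iff_ne_zero, lintegral_pos_iff_support hm]
      have hsupp : Function.support (fun y : ℝ =>
          ENNReal.ofReal (Real.exp (-(2 * (α + d)) * y ^ 2))) = Set.univ := by
        ext y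
        simp [Function.mem_support, ENNReal.ofReal_eq_zero, not_le, Real.exp_pos]
      rw [hsupp]
      simp
    rw [hx, ENNReal.top_mul hy]

end Aux

open Complex in
/-- for strictly plurisubharmonic quadratic weights
`Φⱼ(z) = αⱼ|z|² + Re(βⱼ z²)`, with `a = α₂/α₁` and `b = |β₂-β₁|/α₁`, there is a
constant `C ≥ 0` with `‖u‖_{Φ₂} ≤ C ‖u‖_{Φ₁}` for every entire `u` iff `a - b ≥ 1`,
equivalently iff `Φ₁ ≤ Φ₂` pointwise. -/
theorem embedding_bounded_iff
    (α₁ α₂ : ℝ) (β₁ β₂ : ℂ) (hα₁ : 0 < α₁) (hα₂ : 0 < α₂)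
    (Φ₁ Φ₂ : ℂ → ℝ)
    (hΦ₁ : ∀ z : ℂ, Φ₁ z = α₁ * ‖z‖ ^ 2 + (β₁ * z ^ 2).re)
    (hΦ₂ : ∀ z : ℂ, Φ₂ z = α₂ * ‖z‖ ^ 2 + (β₂ * z ^ 2).re)
    (a b : ℝ) (ha : a = α₂ / α₁) (hb : b = ‖β₂ - β₁‖ / α₁) :
    ((∃ C : ℝ, 0 ≤ C ∧ ∀ u : ℂ → ℂ, Differentiable ℂ u →
        wnorm Φ₂ u ≤ ENNReal.ofReal C * wnorm Φ₁ u) ↔ a - b ≥ 1)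
    ∧ (a - b ≥ 1 ↔ ∀ z : ℂ, Φ₁ z ≤ Φ₂ z) := by
  set δ : ℂ := β₂ - β₁ with hδdef
  have key : a - b ≥ 1 ↔ α₁ + ‖δ‖ ≤ α₂ := by
    rw [ha, hb, ge_iff_le, ← sub_div, le_div_iff₀ hα₁, one_mul]
    constructor <;> intro <;> linarith
  have part2 : (a - b ≥ 1) ↔ ∀ z : ℂ, Φ₁ z ≤ Φ₂ z := by
    rw [key]
    constructor
    · intro h z
      rw [hΦ₁, hΦ₂]
      have h1 := abs_le.1 (re_le δ z)
      have h2 : (δ * z ^ 2).re = (β₂ * z ^ 2).re - (β₁ * z ^ 2).re := by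
        rw [hδdef, sub_mul, Complex.sub_re]
      have h3 : 0 ≤ (α₂ - α₁ - ‖δ‖) * ‖z‖ ^ 2 :=
        mul_nonneg (by linarith) (sq_nonneg _)
      nlinarith [h1.1]
    · intro h
      obtain ⟨w, hw⟩ := IsAlgClosed.exists_pow_nat_eq
        (if δ = 0 then 1 else -((starRingEnd ℂ) δ) / (‖δ‖ : ℂ)) (n := 2) (by norm_num)
      have habsw : ‖w‖ = 1 := by
        have h2 : ‖w‖ ^ 2 = 1 := by
          rw [← norm_pow, hw]
          by_cases hδ : δ = 0
          · simp [hδ]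
          · rw [if_neg hδ, norm_div, norm_neg, Complex.norm_conj, Complex.norm_real, Real.norm_eq_abs,
              abs_of_pos ((norm_pos_iff.2 hδ)), div_self ((norm_ne_zero_iff.2 hδ))]
        nlinarith [norm_nonneg w]
      have hδw : (δ * w ^ 2).re = -(‖δ‖) := by
        by_cases hδ : δ = 0
        · simp [hδ]
        · rw [hw, if_neg hδ]
          have hdne : ((‖δ‖ : ℝ) : ℂ) ≠ 0 :=
            Complex.ofReal_ne_zero.2 ((norm_ne_zero_iff.2 hδ))
          have heq : δ * (-((starRingEnd ℂ) δ) / (‖δ‖ : ℂ))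
              = -((‖δ‖ : ℝ) : ℂ) := by
            field_simp
            rw [Complex.mul_conj, Complex.normSq_eq_norm_sq]
            push_cast
            ring
          rw [heq]
          simp
      have hz := h w
      rw [hΦ₁ w, hΦ₂ w, habsw] at hz
      have h2 : (δ * w ^ 2).re = (β₂ * w ^ 2).re - (β₁ * w ^ 2).re := by
        rw [hδdef, sub_mul, Complex.sub_re]
      rw [hδw] at h2
      simp only [one_pow, mul_one] at hz
      linarith
  refine ⟨?_, part2⟩
  constructor
  · rintro ⟨C, hC0, hC⟩
    by_contra hab
    rw [key] at hab
    push_neg at hab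
    set r : ℝ := max 0 (α₂ - ‖δ‖) with hr
    have hr0 : 0 ≤ r := le_max_left _ _
    have hr1 : α₂ - ‖δ‖ ≤ r := le_max_right _ _
    have hrlt : r < α₁ := max_lt hα₁ (by linarith)
    set e : ℂ := if δ = 0 then 1 else -δ / (‖δ‖ : ℂ) with he
    have habse : ‖e‖ = 1 := by
      by_cases hδ : δ = 0
      · simp [he, hδ]
      · rw [he, if_neg hδ, norm_div, norm_neg, Complex.norm_real, Real.norm_eq_abs,
          abs_of_pos ((norm_pos_iff.2 hδ)), div_self ((norm_ne_zero_iff.2 hδ))]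
    set c : ℂ := β₁ + (r : ℂ) * e with hc
    have h1 : ‖c - β₁‖ < α₁ := by
      have : c - β₁ = (r : ℂ) * e := by rw [hc]; ring
      rw [this, norm_mul, habse, Complex.norm_real, Real.norm_eq_abs, _root_.abs_of_nonneg hr0, mul_one]
      exact hrlt
    have h2 : α₂ ≤ ‖c - β₂‖ := by
      have hcb : c - β₂ = (r : ℂ) * e - δ := by rw [hc, hδdef]; ring
      by_cases hδ : δ = 0
      · rw [hcb, hδ, sub_zero, norm_mul, habse, Complex.norm_real, Real.norm_eq_abs, _root_.abs_of_nonneg hr0, mul_one]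
        simpa [hδ] using hr1
      · have hdpos := (norm_pos_iff.2 hδ)
        have hce : c - β₂ = -(((‖δ‖ + r) / ‖δ‖ : ℝ) : ℂ) * δ := by
          rw [hcb, he, if_neg hδ]
          have hdne : ((‖δ‖ : ℝ) : ℂ) ≠ 0 :=
            Complex.ofReal_ne_zero.2 ((norm_ne_zero_iff.2 hδ))
          push_cast
          field_simp
          ring
        rw [hce, norm_mul, norm_neg, Complex.norm_real, Real.norm_eq_abs,
          _root_.abs_of_nonneg (by positivity), div_mul_cancel₀ _ (ne_of_gt hdpos)]
        linarith
    set u : ℂ → ℂ := fun z => Complex.exp (c * z ^ 2) with hu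
    have hud : Differentiable ℂ u := ((differentiable_const c).mul (differentiable_pow 2)).cexp
    have hpt : ∀ (β : ℂ) (αr : ℝ) (Φ : ℂ → ℝ),
        (∀ z : ℂ, Φ z = αr * ‖z‖ ^ 2 + (β * z ^ 2).re) → ∀ z : ℂ,
        ‖u z‖ ^ 2 * Real.exp (-2 * Φ z)
          = Real.exp (-2 * αr * ‖z‖ ^ 2 + 2 * ((c - β) * z ^ 2).re) := by
      intro β αr Φ hΦ z
      rw [hu]
      simp only [Complex.norm_exp]
      rw [← Real.exp_nat_mul, ← Real.exp_add, hΦ]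
      congr 1
      rw [sub_mul, Complex.sub_re]
      push_cast
      ring
    have hw1 : wnorm Φ₁ u ≠ ⊤ := by
      rw [wnorm]
      simp_rw [hpt β₁ α₁ Φ₁ hΦ₁]
      exact (ENNReal.rpow_lt_top_of_nonneg (by norm_num) (ne_of_lt (gauss_lt_top h1))).ne
    have hw2 : wnorm Φ₂ u = ⊤ := by
      rw [wnorm]
      simp_rw [hpt β₂ α₂ Φ₂ hΦ₂]
      rw [gauss_eq_top hα₂ h2]
      exact ENNReal.top_rpow_of_pos (by norm_num)
    have hle := hC u hud
    rw [hw2, top_le_iff] at hle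
    exact (ENNReal.mul_ne_top ENNReal.ofReal_ne_top hw1) hle.symm.symm
  · intro h
    refine ⟨1, zero_le_one, fun u _ => ?_⟩
    have hpw := part2.1 h
    rw [ENNReal.ofReal_one, one_mul, wnorm, wnorm]
    apply ENNReal.rpow_le_rpow _ (by norm_num)
    apply lintegral_mono
    intro z
    apply ENNReal.ofReal_le_ofReal
    apply mul_le_mul_of_nonneg_left _ (sq_nonneg _)
    exact Real.exp_le_exp.2 (by linarith [hpw z])
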